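/- For every integer t ≥ 1 and every real p with 0 ≤ p ≤ 1, setting q = (1−p)/2 and μ = 4·2^t, the following inequality holds: (∑_{j=1}^{t} ∑_{i=0}^{t−j} μ^{−j} · C(j+i, i) · q^i) · (1 − q) ≤ 1 − 2q + q^{t+1}, where C(j+i,i) denotes the binomial coefficient. (Equivalently, since 1 − 2q + q^{t+1} > 0 for p ∈ [0,1], the quotient (∑_{j=1}^{t} ∑_{i=0}^{t−j} μ^{−j} C(j+i,i) q^i)·(1−q)/(1−2q+q^{t+1}) is at most 1.) -/

import Mathlib

/-! ## Decision trees -/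

/-- Binary decision trees over a variable index type `ι`.  An internal vertex
`node i t0 t1` queries variable `i`; the `0`-edge leads to `t0`, the `1`-edge to `t1`. -/
inductive DTree (ι : Type) : Type where
  | leaf : Bool → DTree ι
  | node : ι → DTree ι → DTree ι → DTree ι

namespace DTree

variable {ι : Type}

/-- Evaluate a decision tree on an input. -/
def eval : DTree ι → (ι → Bool) → Bool
  | leaf b, _ => b
  | node i t0 t1, x => if x i then t1.eval x else t0.eval x

/-- Depth: the number of edges on the longest root-to-leaf path. -/
def depth : DTree ι → ℕ
  | leaf _ => 0
  | node _ t0 t1 => max t0.depth t1.depth + 1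

/-- Distance from the root to the closest leaf. -/
def minLeafDepth : DTree ι → ℕ
  | leaf _ => 0
  | node _ t0 t1 => min t0.minLeafDepth t1.minLeafDepth + 1

/-- A tree is `t`-clipped if every vertex is within distance `t` of some leaf. -/
def Clipped (t : ℕ) : DTree ι → Prop
  | leaf _ => True
  | node _ t0 t1 =>
      min t0.minLeafDepth t1.minLeafDepth + 1 ≤ t ∧ Clipped t t0 ∧ Clipped t t1

/-- No variable in `seen` (nor any variable already queried above) is queried again:
this captures "no variable appears more than once on any root-to-leaf path". -/
def ReadOnceFrom : List ι → DTree ι → Prop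
  | _, leaf _ => True
  | seen, node i t0 t1 =>
      i ∉ seen ∧ ReadOnceFrom (i :: seen) t0 ∧ ReadOnceFrom (i :: seen) t1

/-- No variable appears more than once on any root-to-leaf path. -/
def ReadOnce (T : DTree ι) : Prop := T.ReadOnceFrom []

/-- `T` computes the boolean function `f`. -/
def Computes (T : DTree ι) (f : (ι → Bool) → Bool) : Prop := ∀ x, T.eval x = f x

/-- The list of all variables labelling internal vertices of the tree. -/
def nodeVars : DTree ι → List ι
  | leaf _ => []
  | node i t0 t1 => i :: (t0.nodeVars ++ t1.nodeVars)

/-- The tree has some leaf labelled `b`. -/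
def HasLeaf (b : Bool) : DTree ι → Prop
  | leaf c => c = b
  | node _ t0 t1 => HasLeaf b t0 ∨ HasLeaf b t1

/-- From every internal vertex there is a path to a leaf labelled 0 (`false`)
and a path to a leaf labelled 1 (`true`). -/
def EverySplit : DTree ι → Prop
  | leaf _ => True
  | node _ t0 t1 =>
      (HasLeaf true t0 ∨ HasLeaf true t1) ∧ (HasLeaf false t0 ∨ HasLeaf false t1) ∧
        EverySplit t0 ∧ EverySplit t1

/-- Variable `y` labels some internal vertex at distance `d` (edges) from the root. -/
def OccursAt (y : ι) : ℕ → DTree ι → Prop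
  | _, leaf _ => False
  | 0, node i _ _ => i = y
  | d + 1, node _ t0 t1 => OccursAt y d t0 ∨ OccursAt y d t1

end DTree

/-- `DTdepth f` is the minimum depth of a decision tree computing `f`. -/
noncomputable def DTdepth {ι : Type} (f : (ι → Bool) → Bool) : ℕ :=
  sInf {d | ∃ T : DTree ι, T.ReadOnce ∧ T.Computes f ∧ T.depth ≤ d}

/-! ## Restrictions -/

/-- The function obtained by fixing each variable `i` with `ρ i = some b` to `b`
(variables with `ρ i = none`, i.e. assigned `*`, are left free). -/
def restrictFun {ι : Type} (f : (ι → Bool) → Bool) (ρ : ι → Option Bool) :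
    (ι → Bool) → Bool :=
  fun x => f (fun i => (ρ i).getD (x i))

open Classical in
/-- The probability of the event `E` under a random `p`-restriction: each variable
independently gets `*` (i.e. `none`) with probability `p`, and each of the values
`0`, `1` with probability `(1-p)/2`. -/
noncomputable def restrProb {ι : Type} [Fintype ι] [DecidableEq ι] (p : ℝ)
    (E : (ι → Option Bool) → Prop) : ℝ :=
  ∑ ρ : ι → Option Bool,
    (if E ρ then ∏ i : ι, (if ρ i = none then p else (1 - p) / 2) else 0)

/-! ## Tree tribes -/

/-- The variable index type of the complete `t`-clipped tree `W_t(r)` on `r` levels: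
the first block `v_1, …, v_t`, plus, for each `k < t`, a fresh copy of the variables
of `W_t(r-1)` hanging off the 1-edge of `v_{k+1}`. -/
def XiVars (t : ℕ) : ℕ → Type
  | 0 => Empty
  | r + 1 => Fin t ⊕ (Fin t × XiVars t r)

instance XiVars.instFintype (t : ℕ) : ∀ r, Fintype (XiVars t r)
  | 0 => inferInstanceAs (Fintype Empty)
  | r + 1 =>
      letI := XiVars.instFintype t r
      inferInstanceAs (Fintype (Fin t ⊕ (Fin t × XiVars t r)))

instance XiVars.instDecidableEq (t : ℕ) : ∀ r, DecidableEq (XiVars t r)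
  | 0 => inferInstanceAs (DecidableEq Empty)
  | r + 1 =>
      letI := XiVars.instDecidableEq t r
      inferInstanceAs (DecidableEq (Fin t ⊕ (Fin t × XiVars t r)))

/-- The `t`-clipped xor tree tribe `Ξ_t(r)`: the function computed by `W_t(r)` with
each leaf labelled by the parity of the edge labels on its root-to-leaf path.
Following the 0-edges `v_1 → v_2 → ⋯` until the first variable with value 1 (if any),
whose 1-edge leads to a fresh copy computing the negation of `Ξ_t(r-1)`. -/
def Xi (t : ℕ) : ∀ r, (XiVars t r → Bool) → Bool
  | 0, _ => false
  | r + 1, x =>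
      match (List.finRange t).find? (fun i => x (Sum.inl i)) with
      | none => false
      | some k => ! Xi t r (fun v => x (Sum.inr (k, v)))

namespace XiVars

/-- The list of 1-branch positions (0-indexed within each block) taken on the path
from the root to the block containing the given variable. -/
def branches {t : ℕ} : ∀ {r : ℕ}, XiVars t r → List (Fin t)
  | 0, v => nomatch v
  | _ + 1, Sum.inl _ => []
  | _ + 1, Sum.inr (k, w) => k :: branches w

/-- The (0-indexed) position of the variable within its block. -/
def pos {t : ℕ} : ∀ {r : ℕ}, XiVars t r → Fin t
  | 0, v => nomatch v
  | _ + 1, Sum.inl i => i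
  | _ + 1, Sum.inr (_, w) => pos w

/-- The level of a variable: the recursive step at which it was added (level 1 is the
outermost block). -/
def level {t r : ℕ} (v : XiVars t r) : ℕ := (branches v).length + 1

/-- The distance (number of edges) from the root of `W_t(r)` to the vertex of `v`. -/
def rootDist {t r : ℕ} (v : XiVars t r) : ℕ :=
  ((branches v).map (fun b => (b : ℕ) + 1)).sum + (pos v : ℕ)

/-- The distance from the vertex of `v` to the closest leaf of `W_t(r)`. -/
def leafDist {t r : ℕ} (v : XiVars t r) : ℕ :=
  min (t - (pos v : ℕ)) (1 + min t (r - level v))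

/-- A root-to-leaf path of `W_t(r)` is determined by the list `L` of 1-branch positions
it takes (with `L.length ≤ r`); `v.onPath L` says the vertex of `v` lies on that path. -/
def onPath {t r : ℕ} (v : XiVars t r) (L : List (Fin t)) : Prop :=
  branches v = L ∨
    (branches v <+: L ∧ branches v ≠ L ∧
      ∃ b : Fin t, L[(branches v).length]? = some b ∧ pos v ≤ b)

end XiVars

/-- For `t = 1`, `Ξ_1(n)` is computed by a path on `n` variables: vertex `x_i` has a
0-edge to a leaf and a 1-edge to `x_{i+1}`, leaves labelled by the parity of the edge
labels from the root. -/
def Xi1 : ∀ n, (Fin n → Bool) → Bool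
  | 0, _ => false
  | n + 1, x => if x 0 then ! Xi1 n (fun i => x i.succ) else false

/-! ## Fourier coefficients -/

/-- The Fourier coefficient `f̂_S` of a boolean function, viewed as a function
`{−1,1}^n → {−1,1}` via the identification `false ↔ +1`, `true ↔ −1`:
`f̂_S = E_x[f(x) ∏_{i ∈ S} x_i]` over a uniformly random input. -/
noncomputable def fourierCoeffB {ι : Type} [Fintype ι] [DecidableEq ι]
    (f : (ι → Bool) → Bool) (S : Finset ι) : ℝ :=
  (∑ x : ι → Bool,
      (if f x then (-1 : ℝ) else 1) * ∏ i ∈ S, (if x i then (-1 : ℝ) else 1)) /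
    2 ^ Fintype.card ι

/-- The `i`-th Jacobsthal number `J_i = (2^i − (−1)^i)/3`, as a real number. -/
noncomputable def jacobsthal (i : ℕ) : ℝ := (2 ^ i - (-1) ^ i) / 3

/-- The parity (mod-2 sum) of all the bits of `x`. -/
def parityBool {ι : Type} [Fintype ι] [DecidableEq ι] (x : ι → Bool) : Bool :=
  decide ((Finset.univ.filter fun i => x i = true).card % 2 = 1)

/-! ## The probabilities `P_0(r)`, `P_1(r)` and `γ_d(r)` -/

/-- `P_0(r)`: the probability that `Ξ_t(r)` restricted by a random `p`-restriction is
the identically-`0` function. -/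
noncomputable def Pzero (t : ℕ) (p : ℝ) (r : ℕ) : ℝ :=
  restrProb p (fun ρ : XiVars t r → Option Bool => ∀ x, restrictFun (Xi t r) ρ x = false)

/-- `P_1(r)`: the probability that `Ξ_t(r)` restricted by a random `p`-restriction is
the identically-`1` function. -/
noncomputable def Pone (t : ℕ) (p : ℝ) (r : ℕ) : ℝ :=
  restrProb p (fun ρ : XiVars t r → Option Bool => ∀ x, restrictFun (Xi t r) ρ x = true)

/-- `γ_d(r) = Pr_ρ[DT_depth(Ξ_t(r)|_ρ) ≥ d]` for a random `p`-restriction `ρ`. -/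
noncomputable def gammaDT (t : ℕ) (p : ℝ) (d r : ℕ) : ℝ :=
  restrProb p (fun ρ : XiVars t r → Option Bool => d ≤ DTdepth (restrictFun (Xi t r) ρ))

/-! ## The polynomial sequences `P_0(r), P_1(r) ∈ ℝ[p]` -/

/-- The polynomial `q = (1 − p)/2 ∈ ℝ[p]`. -/
noncomputable def qP : Polynomial ℝ := Polynomial.C (1 / 2) * (1 - Polynomial.X)

/-- The pair of polynomials `(P_0(r), P_1(r)) ∈ ℝ[p] × ℝ[p]`, defined by
`P_0(1) = q^t`, `P_1(1) = 1 − (1−q)^t`, and for `r ≥ 2`, with `U = P_1(r−1)` and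
`V = P_0(r−1)`: `P_0(r) = q·U·∑_{k=0}^{t−1}(q+pU)^k + (q+pU)^t` and
`P_1(r) = q·V·∑_{k=0}^{t−1}(q+pV)^k`.  (The value at `r = 0` is junk.) -/
noncomputable def PP (t : ℕ) : ℕ → Polynomial ℝ × Polynomial ℝ
  | 0 => (1, 0)
  | 1 => (qP ^ t, 1 - (1 - qP) ^ t)
  | r + 2 =>
      (qP * (PP t (r + 1)).2 *
          (∑ k ∈ Finset.range t, (qP + Polynomial.X * (PP t (r + 1)).2) ^ k) +
        (qP + Polynomial.X * (PP t (r + 1)).2) ^ t,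
       qP * (PP t (r + 1)).1 *
          (∑ k ∈ Finset.range t, (qP + Polynomial.X * (PP t (r + 1)).1) ^ k))

/-- The polynomial `P_0(r) ∈ ℝ[p]`. -/
noncomputable def P0poly (t r : ℕ) : Polynomial ℝ := (PP t r).1

/-- The polynomial `P_1(r) ∈ ℝ[p]`. -/
noncomputable def P1poly (t r : ℕ) : Polynomial ℝ := (PP t r).2

set_option maxHeartbeats 1000000

private lemma kci_pascal (j m : ℕ) (q : ℝ) :
    (∑ i ∈ Finset.range (m+1), (((j+1+i).choose i : ℕ) : ℝ) * q^i) * (1-q)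
      = (∑ i ∈ Finset.range (m+1), (((j+i).choose i : ℕ) : ℝ) * q^i)
        - (((j+1+m).choose m : ℕ) : ℝ) * q^(m+1) := by
  induction m with
  | zero => simp
  | succ m ih =>
    rw [Finset.sum_range_succ, Finset.sum_range_succ (f := fun i => (((j+i).choose i : ℕ) : ℝ) * q^i),
      add_mul, ih]
    have hp : (j+1+(m+1)).choose (m+1) = (j+1+m).choose m + (j+1+m).choose (m+1) :=
      Nat.choose_succ_succ' (j+1+m) m
    have hp2 : j + (m+1) = j + 1 + m := by omega
    rw [hp2, hp]
    push_cast
    ring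

private lemma kci_tail_le_one (q : ℝ) (hq0 : 0 ≤ q) (hq2 : q ≤ 1/2) :
    ∀ (j m : ℕ), (∑ i ∈ Finset.range (m+1), (((j+i).choose i : ℕ) : ℝ) * q^i) * (1-q)^(j+1) ≤ 1 := by
  have h1q : (0:ℝ) ≤ 1 - q := by linarith
  intro j
  induction j with
  | zero =>
    intro m
    have h := geom_sum_mul q (m+1)
    have hq : 0 ≤ q^(m+1) := pow_nonneg hq0 _
    simp only [Nat.zero_add, Nat.choose_self, Nat.cast_one, one_mul, pow_one]
    nlinarith [h]
  | succ j ih =>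
    intro m
    have hid := kci_pascal j m q
    have hnn : (0:ℝ) ≤ (((j+1+m).choose m : ℕ) : ℝ) * q^(m+1) * (1-q)^(j+1) := by positivity
    calc (∑ i ∈ Finset.range (m+1), (((j+1+i).choose i : ℕ) : ℝ) * q^i) * (1-q)^(j+1+1)
        = ((∑ i ∈ Finset.range (m+1), (((j+1+i).choose i : ℕ) : ℝ) * q^i) * (1-q)) * (1-q)^(j+1) := by
          rw [pow_succ]; ring
      _ = (∑ i ∈ Finset.range (m+1), (((j+i).choose i : ℕ) : ℝ) * q^i) * (1-q)^(j+1)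
            - (((j+1+m).choose m : ℕ) : ℝ) * q^(m+1) * (1-q)^(j+1) := by rw [hid]; ring
      _ ≤ 1 - 0 := by have := ih m; linarith
      _ = 1 := by ring

private lemma kci_S1 (q : ℝ) (n : ℕ) :
    (∑ i ∈ Finset.range n, (((1+i).choose i : ℕ) : ℝ) * q^i) * (1-q)^2
      = 1 - (n+1) * q^n + n * q^(n+1) := by
  induction n with
  | zero => simp
  | succ n ih =>
    rw [Finset.sum_range_succ, add_mul, ih]
    have : (1+n).choose n = n+1 := by rw [add_comm]; exact Nat.choose_succ_self_right n
    rw [this]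
    push_cast
    ring

private lemma kci_geom_le_two (y : ℝ) (h0 : 0 ≤ y) (h2 : y ≤ 1/2) (n : ℕ) :
    (∑ k ∈ Finset.range n, y^k) ≤ 2 := by
  have h := geom_sum_mul y n
  have hyn : 0 ≤ y^n := pow_nonneg h0 n
  have hs : 0 ≤ ∑ k ∈ Finset.range n, y^k :=
    Finset.sum_nonneg fun k _ => pow_nonneg h0 k
  nlinarith [h]


private lemma kci_case1 (T A Q s : ℝ) (hT : 1 ≤ T) (hA0 : 0 < A) (hA8 : A ≤ 1/8)
    (hs1 : s ≤ 1) (hQ0 : 0 ≤ Q) (hcase : 4*A ≤ s) :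
    A*(1-(1-s)/2)*(1-(T+1)*Q+T*((1-s)/2)*Q) + 2*A^2 ≤ (s+(1-s)/2*Q)*(1-(1-s)/2)^2 := by
  have hs0 : (0:ℝ) ≤ s := by linarith
  have hT0 : (0:ℝ) ≤ T := by linarith
  have hQb : 0 ≤ Q*(1 + T*((1+s)/2)) := by
    have h1 : 0 ≤ T*((1+s)/2) := by positivity
    have := mul_nonneg hQ0 (by linarith : (0:ℝ) ≤ 1 + T*((1+s)/2))
    linarith
  have step1 : A*(1-(1-s)/2)*(1-(T+1)*Q+T*((1-s)/2)*Q) + 2*A^2 ≤ A*((1+s)/2) + 2*A^2 := by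
    have e : A*(1-(1-s)/2)*(1-(T+1)*Q+T*((1-s)/2)*Q)
        = A*((1+s)/2) - A*((1+s)/2)*(Q*(1 + T*((1+s)/2))) := by ring
    have h2 : 0 ≤ A*((1+s)/2)*(Q*(1 + T*((1+s)/2))) := by
      apply mul_nonneg (by positivity) hQb
    linarith
  have step2 : A*((1+s)/2) + 2*A^2 ≤ s*((1+s)/2)^2 := by
    nlinarith [mul_nonneg (by linarith : (0:ℝ) ≤ s - 4*A) hs0,
      mul_nonneg (by linarith : (0:ℝ) ≤ s - 4*A) hA0.le,
      mul_nonneg hA0.le (by linarith : (0:ℝ) ≤ 1 - 4*A),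
      mul_nonneg (mul_nonneg hs0 hs0) hs0]
  have step3 : s*((1+s)/2)^2 ≤ (s+(1-s)/2*Q)*(1-(1-s)/2)^2 := by
    have e : (s+(1-s)/2*Q)*(1-(1-s)/2)^2 = s*((1+s)/2)^2 + ((1-s)/2*Q)*((1+s)/2)^2 := by ring
    have h3 : 0 ≤ ((1-s)/2*Q)*((1+s)/2)^2 :=
      mul_nonneg (mul_nonneg (by linarith) hQ0) (sq_nonneg _)
    linarith
  linarith

private lemma kci_case2 (T A Q s : ℝ) (hT : 1 ≤ T) (hA0 : 0 < A) (hA8 : A ≤ 1/8)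
    (hAT : A*T ≤ 1/8) (hs0 : 0 ≤ s) (hs : s ≤ 4*A)
    (hQ0 : 0 ≤ Q) (hQB : 4*A*(1-T*s) ≤ Q) :
    A*(1-(1-s)/2)*(1-(T+1)*Q+T*((1-s)/2)*Q) + 2*A^2 ≤ (s+(1-s)/2*Q)*(1-(1-s)/2)^2 := by
  have hT0 : (0:ℝ) ≤ T := by linarith
  have hs12 : s ≤ 1/2 := by linarith
  have hTs : T*s ≤ 1/2 := by nlinarith
  have hQ2A : 2*A ≤ Q := by nlinarith
  -- step (b): A*(1-q)*(bracket) ≤ A*(1+s)/2 - A*Q/2 - A*Q*T/4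
  have hb : A*(1-(1-s)/2)*(1-(T+1)*Q+T*((1-s)/2)*Q)
      ≤ A*((1+s)/2) - A*Q/2 - A*Q*T/4 := by
    have e : A*(1-(1-s)/2)*(1-(T+1)*Q+T*((1-s)/2)*Q)
        = A*((1+s)/2) - A*(((1+s)/2)*(Q*(1 + T*((1+s)/2)))) := by ring
    have h1 : (1/2)*(Q*(1+T*(1/2))) ≤ ((1+s)/2)*(Q*(1 + T*((1+s)/2))) := by
      nlinarith [mul_nonneg hQ0 hs0, mul_nonneg (mul_nonneg hQ0 hT0) hs0,
        mul_nonneg (mul_nonneg (mul_nonneg hQ0 hT0) hs0) hs0]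
    have h2 := mul_le_mul_of_nonneg_left h1 hA0.le
    nlinarith [h2]
  -- step (a): RHS ≥ (s + q*Q)/4
  have hq0' : (0:ℝ) ≤ (1-s)/2 := by linarith
  have ha : (s + (1-s)/2*Q)*(1/4 : ℝ) ≤ (s+(1-s)/2*Q)*(1-(1-s)/2)^2 := by
    have h0 : 0 ≤ s + (1-s)/2*Q := by positivity
    have h4 : (1/4:ℝ) ≤ (1-(1-s)/2)^2 := by nlinarith
    exact mul_le_mul_of_nonneg_left h4 h0
  -- core inequality
  have e1 : A*(1-s-T*s)/2 ≤ (1-s)*Q/8 := by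
    have h := mul_nonneg (by linarith : (0:ℝ) ≤ 1-s) (by linarith : 0 ≤ Q - 4*A*(1-T*s))
    nlinarith [mul_nonneg (mul_nonneg (mul_nonneg hA0.le hT0) hs0) hs0]
  have e2 : 2*A^2*(1-T*s) ≤ A*Q/2 := by
    nlinarith [mul_nonneg hA0.le (by linarith : 0 ≤ Q - 4*A*(1-T*s))]
  have e3 : A^2*T/2 ≤ A*Q*T/4 := by
    nlinarith [mul_nonneg (mul_nonneg hA0.le hT0) (by linarith : 0 ≤ Q - 2*A)]
  have hAT0 : (0:ℝ) ≤ A*T := mul_nonneg hA0.le hT0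
  have hAAT0 : (0:ℝ) ≤ A^2*T := by positivity
  have e4 : A*s ≤ s/8 := by nlinarith
  have e5 : A*T*s/2 ≤ s/16 := by nlinarith [mul_nonneg hs0 (by linarith : (0:ℝ) ≤ 1/8 - A*T)]
  have e6 : 2*A^2*T*s ≤ s/32 := by
    have h1 : A^2*T ≤ 1/64 := by nlinarith [mul_nonneg (by linarith : (0:ℝ) ≤ 1/8 - A) hAT0]
    nlinarith [mul_nonneg hs0 (by linarith : (0:ℝ) ≤ 1/64 - A^2*T)]
  -- combine: A*(1+s)/2 + 2*A^2 ≤ s/4 + (1-s)*Q/8 + A*Q/2 + A*Q*T/4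
  linarith [hAAT0]

private lemma kci_two_mul_le (n : ℕ) (hn : 1 ≤ n) : 2*n ≤ 2^n := by
  obtain ⟨m, rfl⟩ := Nat.exists_eq_add_of_le hn
  have h := Nat.lt_two_pow_self (n := m)
  rw [pow_add, pow_one]
  omega

/-- for `t ≥ 1`, `0 ≤ p ≤ 1`, `q = (1−p)/2` and `μ = 4·2^t`:
`(∑_{j=1}^{t} ∑_{i=0}^{t−j} μ^{−j}·C(j+i,i)·q^i)·(1−q) ≤ 1 − 2q + q^{t+1}`. -/
theorem key_coefficient_inequality (t : ℕ) (ht : 1 ≤ t)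
    (p : ℝ) (hp0 : 0 ≤ p) (hp1 : p ≤ 1) :
    (∑ j ∈ Finset.Icc 1 t, ∑ i ∈ Finset.range (t - j + 1),
        ((4 * 2 ^ t : ℝ))⁻¹ ^ j * ((j + i).choose i : ℝ) * ((1 - p) / 2) ^ i) *
        (1 - (1 - p) / 2) ≤
      1 - 2 * ((1 - p) / 2) + ((1 - p) / 2) ^ (t + 1) := by
  have hq0 : (0:ℝ) ≤ (1-p)/2 := by linarith
  have hq2 : (1-p)/2 ≤ 1/2 := by linarith
  set q : ℝ := (1 - p) / 2 with hqdef
  have h1q : (0:ℝ) < 1 - q := by rw [hqdef]; linarith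
  have hmu : (0:ℝ) < 4 * 2^t := by positivity
  set A : ℝ := ((4 * 2 ^ t : ℝ))⁻¹ with hAdef
  have hA0 : 0 < A := by rw [hAdef]; positivity
  have h2t : (2:ℝ) ≤ 2^t := by
    calc (2:ℝ) = 2^1 := (pow_one 2).symm
    _ ≤ 2^t := pow_le_pow_right₀ (by norm_num) ht
  have hA8 : A ≤ 1/8 := by
    rw [hAdef]
    have h8 : (8:ℝ) ≤ 4*2^t := by linarith
    calc (4*2^t : ℝ)⁻¹ ≤ (8:ℝ)⁻¹ := by
          apply inv_anti₀ (by norm_num) h8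
    _ = 1/8 := by norm_num
  have hcast : (2:ℝ)*t ≤ 2^t := by
    have := kci_two_mul_le t ht
    exact_mod_cast this
  have hAmu : A * (4*2^t) = 1 := by rw [hAdef]; field_simp
  have hAT : A * t ≤ 1/8 := by nlinarith [mul_le_mul_of_nonneg_left hcast hA0.le]
  have h4A2 : 4*A*(2:ℝ)^t = 1 := by rw [hAdef]; field_simp
  -- rewrite LHS sum
  have hrw : ∀ j ∈ Finset.Icc 1 t,
      (∑ i ∈ Finset.range (t-j+1), A^j * (((j+i).choose i : ℕ) : ℝ) * q^i)
        = A^j * ∑ i ∈ Finset.range (t-j+1), (((j+i).choose i : ℕ) : ℝ) * q^i := by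
    intro j _
    rw [Finset.mul_sum]
    exact Finset.sum_congr rfl fun i _ => by ring
  rw [Finset.sum_congr rfl hrw]
  have hins : Finset.Icc 1 t = insert 1 (Finset.Ioc 1 t) := (Finset.Ioc_insert_left ht).symm
  rw [hins, Finset.sum_insert (by simp), pow_one]
  -- bound the j ≥ 2 part
  have hy0 : 0 ≤ A/(1-q) := by positivity
  have hy2 : A/(1-q) ≤ 1/2 := by
    rw [div_le_iff₀ h1q]
    have : q ≤ 1/2 := hq2
    nlinarith
  have hterm : ∀ j ∈ Finset.Ioc 1 t,
      A^j * (∑ i ∈ Finset.range (t-j+1), (((j+i).choose i : ℕ) : ℝ) * q^i) * (1-q)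
        ≤ (A/(1-q))^j := by
    intro j _
    have h1 := kci_tail_le_one q hq0 hq2 j (t-j)
    have hpow : (0:ℝ) < (1-q)^j := pow_pos h1q j
    rw [div_pow, le_div_iff₀ hpow]
    calc A^j * (∑ i ∈ Finset.range (t-j+1), (((j+i).choose i : ℕ) : ℝ) * q^i) * (1-q) * (1-q)^j
        = A^j * ((∑ i ∈ Finset.range (t-j+1), (((j+i).choose i : ℕ) : ℝ) * q^i) * (1-q)^(j+1)) := by
          rw [pow_succ]; ring
      _ ≤ A^j * 1 := mul_le_mul_of_nonneg_left h1 (pow_nonneg hA0.le j)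
      _ = A^j := mul_one _
  have hgeom : ∑ j ∈ Finset.Ioc 1 t, (A/(1-q))^j ≤ 2*(A/(1-q))^2 := by
    have hIoc : Finset.Ioc 1 t = Finset.Ico 2 (t+1) := by
      rw [← Finset.Icc_add_one_left_eq_Ioc, ← Finset.Ico_add_one_right_eq_Icc]; rfl
    rw [hIoc, Finset.sum_Ico_eq_sum_range]
    calc ∑ k ∈ Finset.range (t+1-2), (A/(1-q))^(2+k)
        = (A/(1-q))^2 * ∑ k ∈ Finset.range (t+1-2), (A/(1-q))^k := by
          rw [Finset.mul_sum]
          exact Finset.sum_congr rfl fun k _ => pow_add _ 2 k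
      _ ≤ (A/(1-q))^2 * 2 :=
          mul_le_mul_of_nonneg_left (kci_geom_le_two _ hy0 hy2 _) (by positivity)
      _ = 2*(A/(1-q))^2 := by ring
  have hsum : (∑ j ∈ Finset.Ioc 1 t,
      A^j * ∑ i ∈ Finset.range (t-j+1), (((j+i).choose i : ℕ) : ℝ) * q^i) * (1-q)
        ≤ 2*(A/(1-q))^2 := by
    rw [Finset.sum_mul]
    exact le_trans (Finset.sum_le_sum hterm) hgeom
  rw [add_mul]
  have hfin : A * (∑ i ∈ Finset.range (t-1+1), (((1+i).choose i : ℕ) : ℝ) * q^i) * (1-q)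
      + 2*(A/(1-q))^2 ≤ 1 - 2*q + q^(t+1) := by
    have hpow2 : (0:ℝ) < (1-q)^2 := by positivity
    rw [← mul_le_mul_iff_left₀ hpow2]
    have ht1 : t - 1 + 1 = t := Nat.succ_pred_eq_of_pos ht
    have hS1 : (∑ i ∈ Finset.range (t-1+1), (((1+i).choose i : ℕ) : ℝ) * q^i) * (1-q)^2
        = 1 - (t+1)*q^t + t*q^(t+1) := by rw [ht1]; exact kci_S1 q t
    have hyq : (A/(1-q))*(1-q) = A := div_mul_cancel₀ A (ne_of_gt h1q)
    have expand : (A * (∑ i ∈ Finset.range (t-1+1), (((1+i).choose i : ℕ) : ℝ) * q^i) * (1-q)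
        + 2*(A/(1-q))^2)*(1-q)^2
        = A*(1-q)*((∑ i ∈ Finset.range (t-1+1), (((1+i).choose i : ℕ) : ℝ) * q^i)*(1-q)^2)
          + 2*((A/(1-q))*(1-q))^2 := by ring
    rw [expand, hS1, hyq, pow_succ q t]
    rw [hqdef]
    -- goal is now in terms of p, A, ((1-p)/2)^t and (t:ℝ)
    have hT : (1:ℝ) ≤ (t:ℝ) := by exact_mod_cast ht
    have hQ0 : (0:ℝ) ≤ ((1-p)/2)^t := by positivity
    rcases le_or_gt (4*A) p with hc | hc
    · have := kci_case1 (t:ℝ) A (((1-p)/2)^t) p hT hA0 hA8 hp1 hQ0 hc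
      linarith
    · -- Bernoulli lower bound on ((1-p)/2)^t
      have hB : 1 - (t:ℝ)*p ≤ (2*((1-p)/2))^t := by
        have h := one_add_mul_le_pow (show (-2:ℝ) ≤ -p by linarith) t
        have e : (1:ℝ) + -p = 2*((1-p)/2) := by ring
        rw [e] at h
        linarith [h]
      have hQB : 4*A*(1-(t:ℝ)*p) ≤ ((1-p)/2)^t := by
        have h2q : (2*((1-p)/2))^t = 2^t * ((1-p)/2)^t := by rw [mul_pow]
        rw [h2q] at hB
        have h4Apos : (0:ℝ) ≤ 4*A := by linarith
        have hmul := mul_le_mul_of_nonneg_left hB h4Apos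
        have e2 : 4*A*((2:ℝ)^t * ((1-p)/2)^t) = ((1-p)/2)^t := by
          rw [← mul_assoc, h4A2, one_mul]
        rw [e2] at hmul
        exact hmul
      have := kci_case2 (t:ℝ) A (((1-p)/2)^t) p hT hA0 hA8 hAT hp0 hc.le hQ0 hQB
      linarith
  calc A * (∑ i ∈ Finset.range (t-1+1), (((1+i).choose i : ℕ) : ℝ) * q^i) * (1-q)
        + (∑ j ∈ Finset.Ioc 1 t,
            A^j * ∑ i ∈ Finset.range (t-j+1), (((j+i).choose i : ℕ) : ℝ) * q^i) * (1-q)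
      ≤ A * (∑ i ∈ Finset.range (t-1+1), (((1+i).choose i : ℕ) : ℝ) * q^i) * (1-q)
        + 2*(A/(1-q))^2 := by linarith
    _ ≤ 1 - 2*q + q^(t+1) := hfin
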